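/- arXiv:math/9908159 — 2 statements merged into one kernel-verified Lean document; each statement's English description precedes it below -/
import Mathlib

section
/- Suppose κ is a regular uncountable cardinal, λ > κ is a strong limit cardinal, and cf(λ) < κ. Then there exists a club of [λ]^{<κ} which contains no unbounded non-stationary subset, i.e., every unbounded subset of this club is stationary. -/
open Cardinal Set

noncomputable section

/-- A finitary function on the ordinals: an arity `n` together with an
`n`-ary function on ordinals. -/
abbrev FinFun := Σ n : ℕ, (Fin n → Ordinal.{0}) → Ordinal.{0}

/-- `[λ]^{<κ}`: the collection of subsets of `λ` (viewed as the set of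
ordinals `< λ`) of cardinality `< κ`. -/
def smallSubsets (lam kap : Cardinal.{0}) : Set (Set Ordinal.{0}) :=
  {a | (∀ x ∈ a, x < lam.ord) ∧ Cardinal.mk ↥a < Cardinal.lift.{1} kap}

/-- The countable family `F` consists of finitary functions *on `λ`*. -/
def FamOn (lam : Cardinal.{0}) (F : Set FinFun) : Prop :=
  ∀ f ∈ F, ∀ x : Fin f.1 → Ordinal.{0}, (∀ i, x i < lam.ord) → f.2 x < lam.ord

/-- The club `C_F` of `[λ]^{<κ}` associated to a family `F` of finitary
functions on `λ`: the members `a` of `[λ]^{<κ}` closed under every function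
of `F` and such that `a ∩ κ` is an ordinal (an initial segment of `κ`). -/
def clubOf (lam kap : Cardinal.{0}) (F : Set FinFun) : Set (Set Ordinal.{0}) :=
  {a | a ∈ smallSubsets lam kap ∧
    (∀ f ∈ F, ∀ x : Fin f.1 → Ordinal.{0}, (∀ i, x i ∈ a) → f.2 x ∈ a) ∧
    ∃ β < kap.ord, a ∩ Set.Iio kap.ord = Set.Iio β}

/-- `C` is a club of `[λ]^{<κ}`. -/
def IsClub' (lam kap : Cardinal.{0}) (C : Set (Set Ordinal.{0})) : Prop :=
  ∃ F : Set FinFun, F.Countable ∧ FamOn lam F ∧ C = clubOf lam kap F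

/-- `S` is a stationary subset of `[λ]^{<κ}`: it meets every club. -/
def IsStationary' (lam kap : Cardinal.{0}) (S : Set (Set Ordinal.{0})) : Prop :=
  ∀ C, IsClub' lam kap C → (S ∩ C).Nonempty

/-- `S` is an unbounded subset of `[λ]^{<κ}`: every member of `[λ]^{<κ}`
is contained in some member of `S`. -/
def IsUnbounded (lam kap : Cardinal.{0}) (S : Set (Set Ordinal.{0})) : Prop :=
  ∀ b ∈ smallSubsets lam kap, ∃ a ∈ S, b ⊆ a

/-- The club filter `E_{λ,κ}`: the filter generated by the clubs of
`[λ]^{<κ}`. -/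
def clubFilter (lam kap : Cardinal.{0}) : Filter (Set Ordinal.{0}) :=
  Filter.generate {C | IsClub' lam kap C}
namespace ClubAux

open Cardinal Set Ordinal

lemma isStrongLimit_lift {c : Cardinal.{0}} (h : c.IsStrongLimit) :
    (Cardinal.lift.{1} c).IsStrongLimit := by
  constructor
  · simpa using h.ne_zero
  · intro x hx
    obtain ⟨y, hy, rfl⟩ := Cardinal.lt_lift_iff.1 hx
    rw [← Cardinal.lift_two_power]
    exact Cardinal.lift_lt.2 (h.2 hy)

lemma power_lt_of_isStrongLimit {c a b : Cardinal.{u}} (hc : c.IsStrongLimit)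
    (ha : a < c) (hb : b < c) : a ^ b < c := by
  calc a ^ b ≤ (2 ^ a) ^ b := power_le_power_right (cantor a).le
    _ = 2 ^ (a * b) := by rw [← power_mul]
    _ < c := hc.two_power_lt (mul_lt_of_lt hc.aleph0_le ha hb)

/-- Truncation of a finitary ordinal function below `γ`. -/
noncomputable def trunc (n : ℕ) (γ : Ordinal.{0}) (f : (Fin n → Ordinal.{0}) → Ordinal.{0}) :
    (Fin n → Ordinal.{0}) → Ordinal.{0} :=
  fun x => if (∀ i, x i < γ) ∧ f x < γ then f x else 0

/-- All truncations of finitary functions below some `γ < lam.ord`. -/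
def Hset (lam : Cardinal.{0}) (n : ℕ) : Set ((Fin n → Ordinal.{0}) → Ordinal.{0}) :=
  {h | ∃ γ < lam.ord, ∃ f, h = trunc n γ f}

lemma trunc_lt_succ {n : ℕ} {γ : Ordinal.{0}} {f : (Fin n → Ordinal.{0}) → Ordinal.{0}}
    (x : Fin n → Ordinal.{0}) : trunc n γ f x < Order.succ γ := by
  unfold trunc
  split
  · exact lt_of_lt_of_le (by tauto) (Order.le_succ γ)
  · exact lt_of_le_of_lt (zero_le (a := γ)) (Order.lt_succ γ)

lemma Hset_val_lt {lam : Cardinal.{0}} {n : ℕ} {h} (hh : h ∈ Hset lam n)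
    (x : Fin n → Ordinal.{0}) : h x < lam.ord := by
  obtain ⟨γ, hγ, f, rfl⟩ := hh
  unfold trunc
  split
  · exact lt_trans (by tauto) hγ
  · exact lt_of_le_of_lt (zero_le (a := γ)) hγ

lemma mk_Hset_le (lam : Cardinal.{0}) (hsl : lam.IsStrongLimit) (n : ℕ) :
    #(Hset lam n) ≤ Cardinal.lift.{1} lam := by
  have hsl1 : (Cardinal.lift.{1} lam).IsStrongLimit := isStrongLimit_lift hsl
  have hal : ℵ₀ ≤ Cardinal.lift.{1} lam := hsl1.aleph0_le
  have hlim : Order.IsSuccLimit lam.ord := Cardinal.isSuccLimit_ord hsl.aleph0_le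
  have hne : Nonempty ↥(Iio lam.ord) := ⟨⟨0, hlim.pos⟩⟩
  have hbound : ∀ γ : ↥(Iio lam.ord),
      #↥(Set.range (trunc n γ.1)) ≤ Cardinal.lift.{1} lam := by
    rintro ⟨γ, hγ⟩
    have hmap : ∀ h : ↥(Set.range (trunc n γ)), ∀ x : Fin n → Ordinal.{0},
        h.1 x < Order.succ γ := by
      rintro ⟨h, f, rfl⟩ x
      exact trunc_lt_succ x
    have hinj : Function.Injective (fun h : ↥(Set.range (trunc n γ)) =>
        fun y : Fin n → ↥(Iio γ) =>
          (⟨h.1 (fun i => (y i).1), hmap h _⟩ : ↥(Iio (Order.succ γ)))) := by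
      rintro ⟨h₁, hh₁⟩ ⟨h₂, hh₂⟩ hE
      ext x : 2
      obtain ⟨f₁, rfl⟩ := hh₁
      obtain ⟨f₂, rfl⟩ := hh₂
      by_cases hx : ∀ i, x i < γ
      · have := congrArg (fun F => (F (fun i => (⟨x i, hx i⟩ : ↥(Iio γ)))).1) hE
        simpa using this
      · show trunc n γ f₁ x = trunc n γ f₂ x
        unfold trunc
        rw [if_neg (fun hc => hx hc.1), if_neg (fun hc => hx hc.1)]
    calc #↥(Set.range (trunc n γ))
        ≤ #((Fin n → ↥(Iio γ)) → ↥(Iio (Order.succ γ))) := mk_le_of_injective hinj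
      _ = #↥(Iio (Order.succ γ)) ^ #(Fin n → ↥(Iio γ)) := (power_def _ _).symm
      _ ≤ Cardinal.lift.{1} lam := by
          apply le_of_lt
          apply power_lt_of_isStrongLimit hsl1
          · rw [Cardinal.mk_Iio_ordinal]
            exact Cardinal.lift_lt.2 (Cardinal.lt_ord.1 (hlim.succ_lt hγ))
          · have hexp : #(Fin n → ↥(Iio γ)) = #↥(Iio γ) ^ (n : Cardinal.{1}) := by
              rw [mk_arrow, Cardinal.lift_id', mk_fin, Cardinal.lift_natCast]
            rw [hexp]
            apply power_lt_of_isStrongLimit hsl1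
            · rw [Cardinal.mk_Iio_ordinal]
              exact Cardinal.lift_lt.2 (Cardinal.lt_ord.1 hγ)
            · exact lt_of_lt_of_le (nat_lt_aleph0 n) hal
  have hcover : Hset lam n ⊆ ⋃ γ : ↥(Iio lam.ord), Set.range (trunc n γ.1) := by
    rintro h ⟨γ, hγ, f, rfl⟩
    exact Set.mem_iUnion.2 ⟨⟨γ, hγ⟩, f, rfl⟩
  calc #↥(Hset lam n) ≤ #↥(⋃ γ : ↥(Iio lam.ord), Set.range (trunc n γ.1)) :=
        mk_le_mk_of_subset hcover
    _ ≤ #↥(Iio lam.ord) * ⨆ γ : ↥(Iio lam.ord), #↥(Set.range (trunc n γ.1)) :=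
        mk_iUnion_le _
    _ ≤ Cardinal.lift.{1} lam * Cardinal.lift.{1} lam := by
        apply mul_le_mul'
        · rw [Cardinal.mk_Iio_ordinal, card_ord]
        · exact ciSup_le' hbound
    _ = Cardinal.lift.{1} lam := mul_eq_self hal

lemma exists_Phi (lam : Cardinal.{0}) (hsl : lam.IsStrongLimit) (n : ℕ) :
    ∃ Φ : ↥(Iio lam.ord) → ((Fin n → Ordinal.{0}) → Ordinal.{0}),
      (∀ p, Φ p ∈ Hset lam n) ∧ ∀ h ∈ Hset lam n, ∃ p, Φ p = h := by
  classical
  have hlim : Order.IsSuccLimit lam.ord := Cardinal.isSuccLimit_ord hsl.aleph0_le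
  have hne : Nonempty ↥(Hset lam n) :=
    ⟨⟨trunc n 0 (fun _ => 0), 0, hlim.pos, _, rfl⟩⟩
  have hle : #↥(Hset lam n) ≤ #↥(Iio lam.ord) := by
    rw [Cardinal.mk_Iio_ordinal, card_ord]
    exact mk_Hset_le lam hsl n
  obtain ⟨e⟩ := Cardinal.le_def _ _ |>.1 hle
  refine ⟨fun p => (Function.invFun e p).1, fun p => (Function.invFun e p).2, ?_⟩
  intro h hh
  obtain ⟨p, hp⟩ := Function.invFun_surjective e.injective ⟨h, hh⟩
  exact ⟨p, congrArg Subtype.val hp⟩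

end ClubAux


namespace ClubAux

/-- Universal evaluator functions: `Ufun lam Φ n` takes a code `p` (as its first
argument) and evaluates the coded truncated function on the remaining arguments. -/
noncomputable def Ufun (lam : Cardinal.{0})
    (Φ : ∀ n : ℕ, ↥(Set.Iio lam.ord) → ((Fin n → Ordinal.{0}) → Ordinal.{0}))
    (n : ℕ) : FinFun :=
  ⟨n + 1, fun x => if h : x 0 ∈ Set.Iio lam.ord then Φ n ⟨x 0, h⟩ (fun i => x i.succ) else 0⟩

end ClubAux

/-- If `κ` is regular uncountable, `λ > κ` is a strong limit cardinal and
`cf(λ) < κ`, then some club of `[λ]^{<κ}` has all its unbounded subsets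
stationary. -/
theorem exists_club_all_unbounded_subsets_stationary_strongLimit
    (lam kap : Cardinal.{0}) (hreg : kap.IsRegular) (hunc : ℵ₀ < kap)
    (hkl : kap < lam) (hsl : lam.IsStrongLimit) (hcof : lam.ord.cof < kap) :
    ∃ Cs, IsClub' lam kap Cs ∧
      ∀ U ⊆ Cs, IsUnbounded lam kap U → IsStationary' lam kap U := by
  classical
  have hlim : Order.IsSuccLimit lam.ord := Cardinal.isSuccLimit_ord hsl.aleph0_le
  have hord0 : (0 : Ordinal.{0}) < lam.ord := hlim.pos
  choose Φ hΦmem hΦsurj using fun n => ClubAux.exists_Phi lam hsl n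
  set F0 : Set FinFun := Set.range (ClubAux.Ufun lam Φ) with hF0
  refine ⟨clubOf lam kap F0, ⟨F0, Set.countable_range _, ?_, rfl⟩, ?_⟩
  · -- `FamOn lam F0`
    rintro f ⟨n, rfl⟩ x hx
    simp only [ClubAux.Ufun]
    split
    · exact ClubAux.Hset_val_lt (hΦmem n _) _
    · exact hord0
  · intro U hUsub hUnb C hC
    obtain ⟨F, hFc, hFam, rfl⟩ := hC
    obtain ⟨ι, g, hlsub, hmkι⟩ := Ordinal.exists_lsub_cof lam.ord
    have hgi : ∀ i, g i < lam.ord := fun i => hlsub ▸ Ordinal.lt_lsub g i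
    have hsel : ∀ (f : ↥F) (i : ι), ∃ p : ↥(Set.Iio lam.ord),
        Φ f.1.1 p = ClubAux.trunc f.1.1 (g i) f.1.2 :=
      fun f i => hΦsurj _ _ ⟨g i, hgi i, f.1.2, rfl⟩
    choose p hp using hsel
    set b : Set Ordinal.{0} :=
      Set.range (fun z : ↥F × ULift.{1} ι => (p z.1 z.2.down).1) with hbdef
    have hbsmall : b ∈ smallSubsets lam kap := by
      constructor
      · rintro x ⟨z, rfl⟩
        exact (p z.1 z.2.down).2
      · calc Cardinal.mk ↥b ≤ Cardinal.mk (↥F × ULift.{1} ι) := Cardinal.mk_range_le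
          _ = Cardinal.mk ↥F * Cardinal.lift.{1} (Cardinal.mk ι) := by
              rw [Cardinal.mk_prod, Cardinal.lift_id, Cardinal.mk_uLift, Cardinal.lift_id]
          _ ≤ ℵ₀ * Cardinal.lift.{1} lam.ord.cof := by
              apply mul_le_mul'
              · exact Cardinal.mk_le_aleph0_iff.2 (Set.countable_coe_iff.2 hFc)
              · exact le_of_eq (by rw [hmkι])
          _ < Cardinal.lift.{1} kap := by
              apply Cardinal.mul_lt_of_lt
              · exact Cardinal.aleph0_le_lift.2 hunc.le
              · exact Cardinal.aleph0_lt_lift.2 hunc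
              · exact Cardinal.lift_lt.2 hcof
    obtain ⟨a, haU, hba⟩ := hUnb b hbsmall
    refine ⟨a, haU, ?_⟩
    obtain ⟨hsmall, hclos, hβ⟩ := hUsub haU
    refine ⟨hsmall, ?_, hβ⟩
    intro f hf x hx
    have hxlt : ∀ i, x i < lam.ord := fun i => hsmall.1 _ (hx i)
    have hval : f.2 x < lam.ord := hFam f hf x hxlt
    have hδ : Order.succ ((Finset.univ.sup x) ⊔ f.2 x) < lam.ord := by
      apply hlim.succ_lt
      apply max_lt _ hval
      refine (Finset.sup_lt_iff ?_).2 (fun i _ => hxlt i)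
      simpa using hord0
    obtain ⟨i, hi⟩ := Ordinal.lt_lsub_iff.1 (by rw [hlsub]; exact hδ)
    have hxg : ∀ j, x j < g i := by
      intro j
      refine lt_of_lt_of_le (lt_of_le_of_lt ?_ (Order.lt_succ _)) hi
      exact le_trans (Finset.le_sup (Finset.mem_univ j)) le_sup_left
    have hvg : f.2 x < g i :=
      lt_of_lt_of_le (lt_of_le_of_lt le_sup_right (Order.lt_succ _)) hi
    set q := p ⟨f, hf⟩ i with hq
    have hqa : q.1 ∈ a := hba ⟨(⟨f, hf⟩, ULift.up i), rfl⟩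
    have hcoords : ∀ j : Fin (f.1 + 1),
        (Fin.cons q.1 x : Fin (f.1 + 1) → Ordinal.{0}) j ∈ a := by
      intro j
      induction j using Fin.cases with
      | zero => simpa using hqa
      | succ j' => simpa using hx j'
    have hcl := hclos (ClubAux.Ufun lam Φ f.1) ⟨f.1, rfl⟩ (Fin.cons q.1 x) hcoords
    have hcomp : (ClubAux.Ufun lam Φ f.1).2 (Fin.cons q.1 x) = f.2 x := by
      simp only [ClubAux.Ufun, Fin.cons_zero, Fin.cons_succ]
      rw [dif_pos q.2]
      show Φ f.1 q x = f.2 x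
      rw [hp ⟨f, hf⟩ i]
      show (if (∀ j, x j < g i) ∧ f.2 x < g i then f.2 x else 0) = f.2 x
      exact if_pos ⟨hxg, hvg⟩
    rwa [hcomp] at hcl
end
end

section
/- Let κ be a regular uncountable cardinal and let λ > κ be a strong limit cardinal with cf(λ) < κ. Then gen(E_{λ,κ}) = 2^λ, where gen(E_{λ,κ}) is the least cardinality of a family B of members of the club filter E_{λ,κ} that generates E_{λ,κ} (i.e., every member of E_{λ,κ} contains a finite intersection of members of B). -/
open Cardinal Set

noncomputable section

/-- `B` generates the filter `E`: `B ⊆ E` and every member of `E` contains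
a finite intersection of members of `B`. -/
def Generates (E : Filter (Set Ordinal.{0})) (B : Set (Set (Set Ordinal.{0}))) : Prop :=
  (∀ X ∈ B, X ∈ E) ∧
  ∀ X ∈ E, ∃ I : Finset (Set (Set Ordinal.{0})),
    ↑I ⊆ B ∧ ⋂₀ (↑I : Set (Set (Set Ordinal.{0}))) ⊆ X

/-- `gen(E)`: the least cardinality of a subfamily of `E` generating `E`. -/
def genCard (E : Filter (Set Ordinal.{0})) : Cardinal.{1} :=
  sInf {c | ∃ B, Generates E B ∧ Cardinal.mk ↥B = c}

lemma isRegular_lift {c : Cardinal.{0}} (h : c.IsRegular) :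
    (Cardinal.lift.{1} c).IsRegular := by
  constructor
  · have := Cardinal.lift_le.{1}.mpr h.1
    rwa [Cardinal.lift_aleph0] at this
  · rw [← Cardinal.lift_ord, ← Ordinal.lift_cof]
    exact Cardinal.lift_le.mpr h.2

lemma sSup_lt_ord_of_small {kap : Cardinal.{0}} (hreg : kap.IsRegular)
    {s : Set Ordinal.{0}} (hb : ∀ y ∈ s, y < kap.ord)
    (hc : Cardinal.mk ↥s < Cardinal.lift.{1} kap) : sSup s < kap.ord := by
  obtain ⟨c, hc'⟩ := Cardinal.mem_range_lift_of_le hc.le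
  have hclt : c < kap := by
    rw [← Cardinal.lift_lt.{0,1}, hc']
    exact hc
  have hmk : #(ULift.{1} c.out) = #↥s := by
    rw [Cardinal.mk_uLift, Cardinal.mk_out, hc']
  obtain ⟨e⟩ := Cardinal.eq.mp hmk
  have hrange : s = Set.range (fun i : c.out => ((e ⟨i⟩ : ↥s) : Ordinal.{0})) := by
    ext y
    constructor
    · intro hy
      refine ⟨(e.symm ⟨y, hy⟩).down, ?_⟩
      show ((e ⟨(e.symm ⟨y, hy⟩).down⟩ : ↥s) : Ordinal.{0}) = y
      have h2 : (⟨(e.symm ⟨y, hy⟩).down⟩ : ULift.{1} c.out) = e.symm ⟨y, hy⟩ := rfl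
      rw [h2, Equiv.apply_symm_apply]
    · rintro ⟨i, rfl⟩
      exact (e ⟨i⟩).2
  rw [hrange, ← iSup]
  refine Ordinal.iSup_lt_ord ?_ ?_
  · rwa [Cardinal.mk_out, hreg.cof_eq]
  · intro i
    exact hb _ (e ⟨i⟩).2

def appls (G : Set FinFun) (s : Set Ordinal.{0}) : Set Ordinal.{0} :=
  {y | ∃ f ∈ G, ∃ v : Fin f.1 → Ordinal.{0}, (∀ i, v i ∈ s) ∧ f.2 v = y}

def nextBeta (kap : Cardinal.{0}) (s : Set Ordinal.{0}) : Ordinal.{0} :=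
  sSup (insert 0 ((fun y => y + 1) '' (s ∩ Set.Iio kap.ord)))

def tower (kap : Cardinal.{0}) (G : Set FinFun) (x : Ordinal.{0}) : ℕ → Set Ordinal.{0}
  | 0 => {x}
  | n + 1 => tower kap G x n ∪ appls G (tower kap G x n) ∪
      Set.Iio (nextBeta kap (tower kap G x n))

lemma mk_appls_le {G : Set FinFun} (hGc : G.Countable) (s : Set Ordinal.{0}) :
    #↥(appls G s) ≤ max (#↥s) ℵ₀ := by
  set M := max (#↥s) ℵ₀ with hM
  have hMinf : ℵ₀ ≤ M := le_max_right _ _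
  have hsurj : ∃ φ : (Σ f : ↥G, (Fin f.1.1 → ↥s)) → ↥(appls G s), Function.Surjective φ := by
    refine ⟨fun p => ⟨p.1.1.2 (fun i => ↑(p.2 i)), p.1.1, p.1.2, _, fun i => (p.2 i).2, rfl⟩, ?_⟩
    rintro ⟨y, f, hf, v, hv, rfl⟩
    refine ⟨⟨⟨f, hf⟩, fun i => ⟨v i, hv i⟩⟩, rfl⟩
  obtain ⟨φ, hφ⟩ := hsurj
  refine (Cardinal.mk_le_of_surjective hφ).trans ?_
  rw [Cardinal.mk_sigma]
  have hbound : ∀ f : ↥G, #(Fin f.1.1 → ↥s) ≤ M := by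
    intro f
    have : #(Fin f.1.1 → ↥s) = (#↥s) ^ (f.1.1 : Cardinal.{1}) := by
      rw [Cardinal.mk_arrow]
      simp
    rw [this]
    calc (#↥s) ^ (f.1.1 : Cardinal.{1}) ≤ M ^ (f.1.1 : Cardinal.{1}) :=
          Cardinal.power_le_power_right (le_max_left _ _)
      _ = M ^ (f.1.1 : ℕ) := by rw [Cardinal.power_natCast]
      _ ≤ M := Cardinal.power_nat_le hMinf
  refine (Cardinal.sum_le_sum _ (fun _ => M) hbound).trans ?_
  rw [Cardinal.sum_const']
  have hG : #↥G ≤ ℵ₀ := by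
    have := hGc.to_subtype
    exact Cardinal.mk_le_aleph0
  calc #↥G * M ≤ ℵ₀ * M := by
        exact mul_le_mul_left hG M
    _ ≤ M * M := by exact mul_le_mul_left hMinf M
    _ = M := Cardinal.mul_eq_self hMinf

lemma nextBeta_lt {kap : Cardinal.{0}} (hreg : kap.IsRegular)
    {s : Set Ordinal.{0}} (hcard : #↥s < Cardinal.lift.{1} kap) :
    nextBeta kap s < kap.ord := by
  have hlim : Order.IsSuccLimit kap.ord := Cardinal.isSuccLimit_ord hreg.1
  refine sSup_lt_ord_of_small hreg ?_ ?_
  · rintro y (rfl | ⟨z, hz, rfl⟩)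
    · exact hlim.pos
    · show z + 1 < kap.ord
      rw [Ordinal.add_one_eq_succ]
      exact hlim.succ_lt hz.2
  · refine (Cardinal.mk_insert_le).trans_lt ?_
    have h1 : #↥((fun y => y + 1) '' (s ∩ Set.Iio kap.ord)) ≤ #↥s :=
      (Cardinal.mk_image_le).trans (Cardinal.mk_le_mk_of_subset inter_subset_left)
    have haleph : ℵ₀ ≤ Cardinal.lift.{1} kap := by
      have := Cardinal.lift_le.{1}.mpr hreg.1
      rwa [Cardinal.lift_aleph0] at this
    exact Cardinal.add_lt_of_lt haleph (h1.trans_lt hcard)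
      (lt_of_lt_of_le Cardinal.one_lt_aleph0 haleph)

lemma lt_nextBeta {kap : Cardinal.{0}} {s : Set Ordinal.{0}} {y : Ordinal.{0}}
    (hy : y ∈ s) (hyk : y < kap.ord) : y < nextBeta kap s := by
  have hmem : y + 1 ∈ insert 0 ((fun y => y + 1) '' (s ∩ Set.Iio kap.ord)) :=
    Set.mem_insert_of_mem _ ⟨y, ⟨hy, hyk⟩, rfl⟩
  have hbdd : BddAbove (insert 0 ((fun y => y + 1) '' (s ∩ Set.Iio kap.ord))) := by
    refine ⟨kap.ord, ?_⟩
    rintro z (rfl | ⟨w, hw, rfl⟩)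
    · exact zero_le
    · show w + 1 ≤ kap.ord
      rw [Ordinal.add_one_eq_succ]
      exact Order.succ_le_of_lt hw.2
  calc y < y + 1 := lt_add_one y
    _ ≤ nextBeta kap s := le_csSup hbdd hmem

lemma tower_spec {lam kap : Cardinal.{0}} (hreg : kap.IsRegular) (hunc : ℵ₀ < kap)
    (hkl : kap < lam) {G : Set FinFun} (hGc : G.Countable) (hGf : FamOn lam G)
    {x : Ordinal.{0}} (hx : x < lam.ord) :
    ∀ n, #↥(tower kap G x n) < Cardinal.lift.{1} kap ∧
      (∀ y ∈ tower kap G x n, y < lam.ord) := by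
  have haleph : ℵ₀ ≤ Cardinal.lift.{1} kap := by
    have := Cardinal.lift_le.{1}.mpr hreg.1
    rwa [Cardinal.lift_aleph0] at this
  have haleph' : ℵ₀ < Cardinal.lift.{1} kap := by
    have := Cardinal.lift_lt.{0,1}.mpr hunc
    rwa [Cardinal.lift_aleph0] at this
  have hkord : kap.ord < lam.ord := Cardinal.ord_lt_ord.mpr hkl
  intro n
  induction n with
  | zero =>
    constructor
    · show #↥({x} : Set Ordinal.{0}) < _
      rw [Cardinal.mk_singleton]
      exact lt_of_lt_of_le Cardinal.one_lt_aleph0 haleph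
    · rintro y rfl
      exact hx
  | succ n ih =>
    obtain ⟨ihc, ihb⟩ := ih
    have hnb : nextBeta kap (tower kap G x n) < kap.ord := nextBeta_lt hreg ihc
    refine ⟨?_, ?_⟩
    · refine (Cardinal.mk_union_le _ _).trans_lt ?_
      refine Cardinal.add_lt_of_lt haleph ((Cardinal.mk_union_le _ _).trans_lt ?_) ?_
      · refine Cardinal.add_lt_of_lt haleph ihc ?_
        exact (mk_appls_le hGc _).trans_lt (max_lt ihc haleph')
      · rw [Ordinal.mk_Iio_ordinal]
        exact Cardinal.lift_lt.{0,1}.mpr (Cardinal.lt_ord.mp hnb)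
    · rintro y ((hy | hy) | hy)
      · exact ihb y hy
      · obtain ⟨f, hf, v, hv, rfl⟩ := hy
        exact hGf f hf v (fun i => ihb _ (hv i))
      · exact lt_trans (lt_trans hy hnb) hkord

lemma tower_mono {kap : Cardinal.{0}} {G : Set FinFun} {x : Ordinal.{0}} :
    Monotone (tower kap G x) := by
  refine monotone_nat_of_le_succ ?_
  intro n
  exact (Set.subset_union_left).trans Set.subset_union_left

lemma exists_mem_clubOf {lam kap : Cardinal.{0}} (hreg : kap.IsRegular) (hunc : ℵ₀ < kap)
    (hkl : kap < lam) {G : Set FinFun} (hGc : G.Countable) (hGf : FamOn lam G)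
    {x : Ordinal.{0}} (hx : x < lam.ord) :
    ∃ a ∈ clubOf lam kap G, x ∈ a := by
  classical
  set A : Set Ordinal.{0} := ⋃ i : ULift.{1} ℕ, tower kap G x i.down with hA
  have hspec := tower_spec hreg hunc hkl hGc hGf hx
  have haleph' : ℵ₀ < Cardinal.lift.{1} kap := by
    have := Cardinal.lift_lt.{0,1}.mpr hunc
    rwa [Cardinal.lift_aleph0] at this
  have hsubA : ∀ n : ℕ, tower kap G x n ⊆ A := fun n => Set.subset_iUnion
    (fun i : ULift.{1} ℕ => tower kap G x i.down) ⟨n⟩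
  -- cardinality
  have hcardA : #↥A < Cardinal.lift.{1} kap := by
    refine (Cardinal.mk_iUnion_le _).trans_lt ?_
    refine Cardinal.mul_lt_of_lt haleph'.le ?_ ?_
    · rw [Cardinal.mk_uLift, Cardinal.mk_nat, Cardinal.lift_aleph0]
      exact haleph'
    · refine Cardinal.iSup_lt_lift_of_isRegular.{1,0} (isRegular_lift hreg) ?_ ?_
      · rw [Cardinal.lift_uzero, Cardinal.mk_uLift, Cardinal.mk_nat, Cardinal.lift_aleph0]
        exact haleph'
      · intro i
        exact (hspec i.down).1
  -- bounded by lam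
  have hbA : ∀ y ∈ A, y < lam.ord := by
    intro y hy
    obtain ⟨i, hi⟩ := Set.mem_iUnion.mp hy
    exact (hspec i.down).2 y hi
  -- closure
  have hclos : ∀ f ∈ G, ∀ v : Fin f.1 → Ordinal.{0}, (∀ i, v i ∈ A) → f.2 v ∈ A := by
    intro f hf v hv
    have hn : ∀ i, ∃ n : ℕ, v i ∈ tower kap G x n := by
      intro i
      obtain ⟨j, hj⟩ := Set.mem_iUnion.mp (hv i)
      exact ⟨j.down, hj⟩
    choose nf hnf using hn
    set N := Finset.univ.sup nf with hN
    have hvN : ∀ i, v i ∈ tower kap G x N :=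
      fun i => tower_mono (Finset.le_sup (Finset.mem_univ i)) (hnf i)
    have : f.2 v ∈ appls G (tower kap G x N) := ⟨f, hf, v, hvN, rfl⟩
    exact hsubA (N + 1) (Set.subset_union_left (Set.subset_union_right this))
  -- initial segment
  set β : Ordinal.{0} := ⨆ n : ℕ, nextBeta kap (tower kap G x n) with hβ
  have hnb : ∀ n : ℕ, nextBeta kap (tower kap G x n) < kap.ord :=
    fun n => nextBeta_lt hreg (hspec n).1
  have hβlt : β < kap.ord := by
    refine Ordinal.iSup_lt_ord ?_ hnb
    rw [Cardinal.mk_nat, hreg.cof_eq]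
    exact hunc
  have hbdd : BddAbove (Set.range fun n : ℕ => nextBeta kap (tower kap G x n)) :=
    Ordinal.bddAbove_range _
  have hseg : A ∩ Set.Iio kap.ord = Set.Iio β := by
    ext y
    constructor
    · rintro ⟨hyA, hyk⟩
      obtain ⟨i, hi⟩ := Set.mem_iUnion.mp hyA
      have : y < nextBeta kap (tower kap G x i.down) := lt_nextBeta hi hyk
      exact this.trans_le (le_ciSup hbdd i.down)
    · intro hy
      have hex : ∃ n : ℕ, y < nextBeta kap (tower kap G x n) := by
        by_contra hcon
        push_neg at hcon
        exact absurd (ciSup_le hcon) (not_le.mpr hy)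
      obtain ⟨n, hn⟩ := hex
      refine ⟨hsubA (n + 1) (Set.subset_union_right hn), hn.trans (hnb n)⟩
  exact ⟨A, ⟨⟨hbA, hcardA⟩, hclos, β, hβlt, hseg⟩, hsubA 0 rfl⟩

lemma clubOf_anti {lam kap : Cardinal.{0}} {F₁ F₂ : Set FinFun} (h : F₁ ⊆ F₂) :
    clubOf lam kap F₂ ⊆ clubOf lam kap F₁ :=
  fun _ ⟨h1, h2, h3⟩ => ⟨h1, fun f hf => h2 f (h hf), h3⟩

lemma isClub_mem_clubFilter {lam kap : Cardinal.{0}} {C : Set (Set Ordinal.{0})}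
    (h : IsClub' lam kap C) : C ∈ clubFilter lam kap :=
  Filter.mem_generate_iff.mpr ⟨{C}, by simpa, Set.finite_singleton _, by simp⟩

lemma exists_club_subset {lam kap : Cardinal.{0}} {X : Set (Set Ordinal.{0})}
    (hX : X ∈ clubFilter lam kap) :
    ∃ G : Set FinFun, G.Countable ∧ FamOn lam G ∧ clubOf lam kap G ⊆ X := by
  obtain ⟨t, hts, htf, htsub⟩ := Filter.mem_generate_iff.mp hX
  have hch : ∀ C : ↥t, ∃ F : Set FinFun, F.Countable ∧ FamOn lam F ∧ ↑C = clubOf lam kap F :=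
    fun C => hts C.2
  choose Ft hFtc hFtf hFteq using hch
  refine ⟨⋃ C : ↥t, Ft C, ?_, ?_, ?_⟩
  · have : t.Countable := htf.countable
    have := this.to_subtype
    exact Set.countable_iUnion hFtc
  · intro f hf
    obtain ⟨C, hC⟩ := Set.mem_iUnion.mp hf
    exact hFtf C f hC
  · refine subset_trans ?_ htsub
    intro a ha
    intro C hC
    have := clubOf_anti (Set.subset_iUnion Ft ⟨C, hC⟩) ha
    rwa [← hFteq ⟨C, hC⟩] at this

lemma exists_code {lam : Cardinal.{0}} (hsl : lam.IsStrongLimit) :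
    ∃ code : Ordinal.{0} → Set Ordinal.{0} → Ordinal.{0},
      (∀ x, x < lam.ord → ∀ A, code x A < lam.ord) ∧
      (∀ x, x < lam.ord → ∀ A A', code x A = code x A' →
        A ∩ Set.Iio x = A' ∩ Set.Iio x) := by
  classical
  have key : ∀ x : Ordinal.{0}, x < lam.ord →
      Nonempty ((Set ↥(Set.Iio x)) ↪ ↥(Set.Iio lam.ord)) := by
    intro x hx
    rw [← Cardinal.le_def, Cardinal.mk_set, Ordinal.mk_Iio_ordinal, Ordinal.mk_Iio_ordinal,
      Cardinal.card_ord]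
    calc (2 : Cardinal.{1}) ^ Cardinal.lift.{1} x.card
        = Cardinal.lift.{1} (2 ^ x.card) := by
          rw [Cardinal.lift_power, Cardinal.lift_two]
      _ ≤ Cardinal.lift.{1} lam :=
          Cardinal.lift_le.mpr (hsl.two_power_lt (Cardinal.lt_ord.mp hx)).le
  refine ⟨fun x A => if hx : x < lam.ord then
      ((Classical.choice (key x hx)) (Subtype.val ⁻¹' A : Set ↥(Set.Iio x)) : ↥(Set.Iio lam.ord)).1
    else 0, ?_, ?_⟩
  · intro x hx A
    dsimp only
    rw [dif_pos hx]
    exact ((Classical.choice (key x hx)) (Subtype.val ⁻¹' A : Set ↥(Set.Iio x))).2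
  · intro x hx A A' h
    dsimp only at h
    rw [dif_pos hx, dif_pos hx] at h
    have h2 : (Subtype.val ⁻¹' A : Set ↥(Set.Iio x)) = (Subtype.val ⁻¹' A' : Set ↥(Set.Iio x)) :=
      (Classical.choice (key x hx)).injective (Subtype.ext h)
    have h3 := congrArg (fun S : Set ↥(Set.Iio x) => Subtype.val '' S) h2
    rw [Subtype.image_preimage_coe, Subtype.image_preimage_coe] at h3
    rw [Set.inter_comm A, Set.inter_comm A']
    exact h3

lemma mk_finsetSubtype {α : Type*} (B : Set α) :
    #{I : Finset α // ↑I ⊆ B} ≤ max (#↥B) ℵ₀ := by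
  classical
  have hinj : Function.Injective
      (fun I : {I : Finset α // ↑I ⊆ B} => I.1.subtype (· ∈ B)) := by
    intro I J h
    have hI : (I.1.subtype (· ∈ B)).map (Function.Embedding.subtype _) = I.1 := by
      rw [Finset.subtype_map, Finset.filter_true_of_mem (fun x hx => I.2 hx)]
    have hJ : (J.1.subtype (· ∈ B)).map (Function.Embedding.subtype _) = J.1 := by
      rw [Finset.subtype_map, Finset.filter_true_of_mem (fun x hx => J.2 hx)]
    apply Subtype.ext
    rw [← hI, ← hJ]
    exact congrArg _ h
  refine (Cardinal.mk_le_of_injective hinj).trans ?_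
  rcases isEmpty_or_nonempty ↥B with hE | hN
  · have : Countable ↥B := Subsingleton.to_countable
    have : Countable (Finset ↥B) := inferInstance
    exact le_max_of_le_right Cardinal.mk_le_aleph0
  · have hinj2 : Function.Injective (fun s : Finset ↥B => s.toList) := by
      intro s t h
      have := congrArg List.toFinset h
      rwa [Finset.toList_toFinset, Finset.toList_toFinset] at this
    refine (Cardinal.mk_le_of_injective hinj2).trans ?_
    rw [Cardinal.mk_list_eq_max_mk_aleph0]

lemma gen_lower {lam kap : Cardinal.{0}} (hreg : kap.IsRegular) (hunc : ℵ₀ < kap)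
    (hkl : kap < lam) (hsl : lam.IsStrongLimit) (hcof : lam.ord.cof < kap)
    {B : Set (Set (Set Ordinal.{0}))} (hB : Generates (clubFilter lam kap) B) :
    2 ^ Cardinal.lift.{1} lam ≤ #↥B := by
  classical
  by_contra hlt
  push_neg at hlt
  have hlaminf : ℵ₀ ≤ lam := hsl.aleph0_le
  have hlamlim : Order.IsSuccLimit lam.ord := Cardinal.isSuccLimit_ord hlaminf
  have hll : ℵ₀ ≤ Cardinal.lift.{1} lam := by
    have := Cardinal.lift_le.{1}.mpr hlaminf
    rwa [Cardinal.lift_aleph0] at this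
  have haleph2 : ℵ₀ ≤ (2 : Cardinal.{1}) ^ Cardinal.lift.{1} lam :=
    le_trans hll (Cardinal.cantor _).le
  -- the coding function
  obtain ⟨code, hcode1, hcode2⟩ := exists_code hsl
  -- the short cofinal sequence
  obtain ⟨ι, fseq, hlsub, hmkι⟩ := Ordinal.exists_lsub_cof lam.ord
  have hfi : ∀ i, fseq i < lam.ord := by
    intro i
    rw [← hlsub]
    exact Ordinal.lt_lsub fseq i
  have hcofin : ∀ y, y < lam.ord → ∃ i, y ≤ fseq i := by
    intro y hy
    rw [← hlsub] at hy
    exact Ordinal.lt_lsub_iff.mp hy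
  -- the finite subsets of B, with clubs below them
  set T := {I : Finset (Set (Set Ordinal.{0})) // ↑I ⊆ B} with hT
  have hceach : ∀ I : T, ∃ G : Set FinFun,
      G.Countable ∧ FamOn lam G ∧ clubOf lam kap G ⊆ ⋂₀ (↑I.1 : Set (Set (Set Ordinal.{0}))) := by
    intro I
    have hmem : ⋂₀ (↑I.1 : Set (Set (Set Ordinal.{0}))) ∈ clubFilter lam kap :=
      (Filter.sInter_mem (I.1.finite_toSet)).mpr (fun U hU => hB.1 U (I.2 hU))
    exact exists_club_subset hmem
  choose GI hGIc hGIf hGIsub using hceach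
  -- closure points
  have haPt : ∀ (I : T) (i : ι), ∃ a ∈ clubOf lam kap (GI I), fseq i ∈ a :=
    fun I i => exists_mem_clubOf hreg hunc hkl (hGIc I) (hGIf I) (hfi i)
  choose aPt haPt1 haPt2 using haPt
  -- each subset of lam gives a club
  set gam : Set ↥(Set.Iio lam.ord) → FinFun :=
    fun A => ⟨1, fun v => code (v 0) (Subtype.val '' A)⟩ with hgam
  have hserve : ∀ A : Set ↥(Set.Iio lam.ord),
      ∃ I : T, clubOf lam kap (GI I) ⊆ clubOf lam kap {gam A} := by
    intro A
    have hclub : IsClub' lam kap (clubOf lam kap {gam A}) := by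
      refine ⟨{gam A}, Set.countable_singleton _, ?_, rfl⟩
      rintro f rfl v hv
      exact hcode1 _ (hv 0) _
    obtain ⟨I, hIB, hIsub⟩ := hB.2 _ (isClub_mem_clubFilter hclub)
    exact ⟨⟨I, hIB⟩, (hGIsub ⟨I, hIB⟩).trans hIsub⟩
  choose IA hIA using hserve
  -- the injection
  have hpf : ∀ (A : Set ↥(Set.Iio lam.ord)) (i : ι),
      code (fseq i) (Subtype.val '' A) ∈ aPt (IA A) i := by
    intro A i
    have hmem : aPt (IA A) i ∈ clubOf lam kap {gam A} := hIA A (haPt1 _ i)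
    have := hmem.2.1 (gam A) rfl (fun _ => fseq i) (fun _ => haPt2 (IA A) i)
    exact this
  set Ψ : Set ↥(Set.Iio lam.ord) → Σ I : T, ∀ i : ι, ↥(aPt I i) :=
    fun A => ⟨IA A, fun i => ⟨code (fseq i) (Subtype.val '' A), hpf A i⟩⟩ with hΨ
  have hinj : Function.Injective Ψ := by
    intro A A' h
    have h2 := congrArg (fun p : Σ I : T, ∀ i : ι, ↥(aPt I i) =>
      ((p.1 : T), fun i : ι => ((p.2 i : ↥(aPt p.1 i)) : Ordinal.{0}))) h
    have h3 : ∀ i : ι, code (fseq i) (Subtype.val '' A) = code (fseq i) (Subtype.val '' A') := by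
      intro i
      exact congrFun (congrArg Prod.snd h2) i
    have hAA : Subtype.val '' A = Subtype.val '' A' := by
      have hsub : ∀ (X Y : Set ↥(Set.Iio lam.ord)), (∀ i : ι,
          Subtype.val '' X ∩ Set.Iio (fseq i) = Subtype.val '' Y ∩ Set.Iio (fseq i)) →
          Subtype.val '' X ⊆ Subtype.val '' Y := by
        intro X Y hXY y hy
        obtain ⟨z, hz, rfl⟩ := hy
        have hzlt : (z : Ordinal.{0}) < lam.ord := z.2
        have hzlt1 : (z : Ordinal.{0}) + 1 < lam.ord := by
          rw [Ordinal.add_one_eq_succ]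
          exact hlamlim.succ_lt hzlt
        obtain ⟨i, hi⟩ := hcofin _ hzlt1
        have hzi : (z : Ordinal.{0}) < fseq i := lt_of_lt_of_le (lt_add_one _) hi
        have : (z : Ordinal.{0}) ∈ Subtype.val '' Y ∩ Set.Iio (fseq i) := by
          rw [← hXY i]
          exact ⟨⟨z, hz, rfl⟩, hzi⟩
        exact this.1
      have hpieces : ∀ i : ι, Subtype.val '' A ∩ Set.Iio (fseq i) =
          Subtype.val '' A' ∩ Set.Iio (fseq i) :=
        fun i => hcode2 (fseq i) (hfi i) _ _ (h3 i)
      exact le_antisymm (hsub A A' hpieces) (hsub A' A (fun i => (hpieces i).symm))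
    exact Set.image_injective.mpr Subtype.val_injective hAA
  -- cardinality contradiction
  have hchain : (2 : Cardinal.{1}) ^ Cardinal.lift.{1} lam ≤ #(Σ I : T, ∀ i : ι, ↥(aPt I i)) := by
    have := Cardinal.mk_le_of_injective hinj
    rwa [Cardinal.mk_set, Ordinal.mk_Iio_ordinal, Cardinal.card_ord] at this
  have hbound : #(Σ I : T, ∀ i : ι, ↥(aPt I i)) < 2 ^ Cardinal.lift.{1} lam := by
    rw [Cardinal.mk_sigma]
    have hprod : ∀ I : T, #(∀ i : ι, ↥(aPt I i)) ≤ Cardinal.lift.{1} (2 ^ kap) := by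
      intro I
      rw [Cardinal.mk_pi]
      refine le_trans (Cardinal.prod_le_prod _ (fun _ => Cardinal.lift.{1} kap)
        (fun i => ((haPt1 I i).1.2).le)) ?_
      rw [Cardinal.prod_const]
      rw [Cardinal.lift_uzero, hmkι]
      calc Cardinal.lift.{1} kap ^ Cardinal.lift.{1} lam.ord.cof
          = Cardinal.lift.{1} (kap ^ lam.ord.cof) := (Cardinal.lift_power _ _).symm
        _ ≤ Cardinal.lift.{1} (2 ^ kap) := by
            refine Cardinal.lift_le.mpr ?_
            calc kap ^ lam.ord.cof ≤ kap ^ kap :=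
                Cardinal.power_le_power_left (Cardinal.aleph0_pos.trans_le hreg.1).ne' hcof.le
              _ = 2 ^ kap := Cardinal.power_self_eq hreg.1
    refine lt_of_le_of_lt (Cardinal.sum_le_sum _ (fun _ => Cardinal.lift.{1} (2 ^ kap)) hprod) ?_
    rw [Cardinal.sum_const']
    refine Cardinal.mul_lt_of_lt haleph2 ?_ ?_
    · exact lt_of_le_of_lt (mk_finsetSubtype B)
        (max_lt hlt (lt_of_le_of_lt hll (Cardinal.cantor _)))
    · exact lt_trans (Cardinal.lift_lt.mpr (hsl.two_power_lt hkl)) (Cardinal.cantor _)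
  exact absurd hchain (not_le.mpr hbound)

lemma generates_isClub {lam kap : Cardinal.{0}} :
    Generates (clubFilter lam kap) {C | IsClub' lam kap C} := by
  constructor
  · exact fun X hX => isClub_mem_clubFilter hX
  · intro X hX
    obtain ⟨t, hts, htf, htsub⟩ := Filter.mem_generate_iff.mp hX
    refine ⟨htf.toFinset, ?_, ?_⟩
    · rw [Set.Finite.coe_toFinset]
      exact hts
    · rw [Set.Finite.coe_toFinset]
      exact htsub

def RFun (lam : Cardinal.{0}) : Type 1 :=
  Σ n : ℕ, (Fin n → ↥(Set.Iio lam.ord)) → ↥(Set.Iio lam.ord)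

lemma mk_clubs_le {lam kap : Cardinal.{0}} (hlam : ℵ₀ ≤ lam) :
    #↥{C | IsClub' lam kap C} ≤ 2 ^ Cardinal.lift.{1} lam := by
  classical
  have hl0 : (0 : Ordinal.{0}) < lam.ord := by
    rw [← Cardinal.ord_zero, Cardinal.ord_lt_ord]
    exact lt_of_lt_of_le Cardinal.aleph0_pos hlam
  -- extension of a restricted function
  set extF : RFun lam → FinFun := fun r =>
    ⟨r.1, fun v => if h : ∀ i, v i < lam.ord then ↑(r.2 (fun i => ⟨v i, h i⟩)) else 0⟩ with hextF
  set restF : FinFun → RFun lam := fun f =>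
    ⟨f.1, fun v => if h : f.2 (fun i => ↑(v i)) < lam.ord then ⟨_, h⟩ else ⟨0, hl0⟩⟩ with hrestF
  -- the key pointwise computation
  have hkey : ∀ f : FinFun, ∀ v : Fin f.1 → Ordinal.{0}, (∀ i, v i < lam.ord) →
      f.2 v < lam.ord → (extF (restF f)).2 v = f.2 v := by
    intro f v hv hfv
    show (if h : ∀ i, v i < lam.ord then
        ↑((restF f).2 (fun i => ⟨v i, h i⟩)) else (0 : Ordinal.{0})) = f.2 v
    rw [dif_pos hv]
    show (if h : f.2 (fun i => ↑(⟨v i, hv i⟩ : ↥(Set.Iio lam.ord))) < lam.ord then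
        (⟨_, h⟩ : ↥(Set.Iio lam.ord)) else ⟨0, hl0⟩).1 = f.2 v
    have hv' : (fun i => ((⟨v i, hv i⟩ : ↥(Set.Iio lam.ord)) : Ordinal.{0})) = v := rfl
    rw [hv']
    rw [dif_pos hfv]
  -- surjection from countable sets of restricted functions onto clubs
  have hsurj : ∀ C : ↥{C | IsClub' lam kap C}, ∃ R : {R : Set (RFun lam) // R.Countable},
      clubOf lam kap (extF '' R.1) = ↑C ∧ IsClub' lam kap (clubOf lam kap (extF '' R.1)) := by
    rintro ⟨C, F, hFc, hFf, rfl⟩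
    refine ⟨⟨restF '' F, hFc.image _⟩, ?_, ?_⟩
    · -- clubOf (extF '' restF '' F) = clubOf F
      ext a
      simp only [clubOf, Set.mem_setOf_eq]
      constructor
      · rintro ⟨h1, h2, h3⟩
        refine ⟨h1, ?_, h3⟩
        intro f hf v hv
        have hva : ∀ i, v i < lam.ord := fun i => h1.1 _ (hv i)
        have := h2 (extF (restF f)) ⟨restF f, ⟨f, hf, rfl⟩, rfl⟩ v hv
        rwa [hkey f v hva (hFf f hf v hva)] at this
      · rintro ⟨h1, h2, h3⟩
        refine ⟨h1, ?_, h3⟩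
        rintro g ⟨r, ⟨f, hf, rfl⟩, rfl⟩ v hv
        have hva : ∀ i, v i < lam.ord := fun i => h1.1 _ (hv i)
        have heq := hkey f v hva (hFf f hf v hva)
        -- arities agree definitionally
        rw [heq]
        exact h2 f hf v hv
    · refine ⟨extF '' (restF '' F), (hFc.image _).image _, ?_, rfl⟩
      rintro g ⟨r, hr, rfl⟩ v hv
      show (if h : ∀ i, v i < lam.ord then ↑(r.2 (fun i => ⟨v i, h i⟩)) else (0:Ordinal.{0}))
        < lam.ord
      rw [dif_pos hv]
      exact (r.2 _).2
  choose Rof hRof _ using hsurj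
  have hinjR : Function.Injective Rof := by
    intro C C' h
    apply Subtype.ext
    rw [← hRof C, ← hRof C', h]
  refine (Cardinal.mk_le_of_injective hinjR).trans ?_
  -- count countable subsets of RFun lam
  have hmkR : #(RFun lam) ≤ 2 ^ Cardinal.lift.{1} lam := by
    have hequiv : #(RFun lam) = #(Σ m : ULift.{1} ℕ,
        ((Fin m.down → ↥(Set.Iio lam.ord)) → ↥(Set.Iio lam.ord))) := by
      refine Cardinal.mk_congr (Equiv.symm ?_)
      exact Equiv.sigmaCongrLeft
        (β := fun n : ℕ => (Fin n → ↥(Set.Iio lam.ord)) → ↥(Set.Iio lam.ord))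
        Equiv.ulift.{1,0}
    rw [hequiv, Cardinal.mk_sigma]
    have hC : ℵ₀ ≤ Cardinal.lift.{1} lam := by
      have := Cardinal.lift_le.{1}.mpr hlam
      rwa [Cardinal.lift_aleph0] at this
    have hsummand : ∀ m : ULift.{1} ℕ,
        #((Fin m.down → ↥(Set.Iio lam.ord)) → ↥(Set.Iio lam.ord))
          ≤ 2 ^ Cardinal.lift.{1} lam := by
      intro m
      have hIio : #↥(Set.Iio lam.ord) = Cardinal.lift.{1} lam := by
        rw [Ordinal.mk_Iio_ordinal, Cardinal.card_ord]
      rw [Cardinal.mk_arrow, Cardinal.mk_arrow, hIio]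
      simp only [Cardinal.lift_id, Cardinal.lift_uzero, Cardinal.mk_fin, Cardinal.lift_natCast]
      have h1 : (Cardinal.lift.{1} lam) ^ ((m.down : ℕ) : Cardinal.{1})
          ≤ Cardinal.lift.{1} lam := by
        rw [Cardinal.power_natCast]
        exact Cardinal.power_nat_le hC
      have hne : Cardinal.lift.{1} lam ≠ 0 :=
        (lt_of_lt_of_le Cardinal.aleph0_pos hC).ne'
      calc (Cardinal.lift.{1} lam) ^ ((Cardinal.lift.{1} lam) ^ ((m.down : ℕ) : Cardinal.{1}))
          ≤ (Cardinal.lift.{1} lam) ^ (Cardinal.lift.{1} lam) :=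
            Cardinal.power_le_power_left hne h1
        _ = 2 ^ Cardinal.lift.{1} lam := Cardinal.power_self_eq hC
    refine le_trans (Cardinal.sum_le_sum _ _ hsummand) ?_
    rw [Cardinal.sum_const', Cardinal.mk_uLift, Cardinal.mk_nat, Cardinal.lift_aleph0]
    rw [Cardinal.mul_eq_right (le_trans hC (Cardinal.cantor _).le)
      (le_trans hC (Cardinal.cantor _).le) Cardinal.aleph0_ne_zero]
  -- injection of countable subsets into ℕ → Option (RFun lam)
  have hC : ℵ₀ ≤ Cardinal.lift.{1} lam := by
    have := Cardinal.lift_le.{1}.mpr hlam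
    rwa [Cardinal.lift_aleph0] at this
  have hcnt : ∀ R : {R : Set (RFun lam) // R.Countable},
      ∃ f : ℕ → Option (RFun lam), (Option.some '' R.1 ∪ {none}) = Set.range f := by
    intro R
    refine Set.Countable.exists_eq_range ?_ ?_
    · exact (R.2.image _).union (Set.countable_singleton _)
    · exact ⟨none, Or.inr rfl⟩
  choose enum henum using hcnt
  have hinj2 : Function.Injective enum := by
    intro R R' h
    apply Subtype.ext
    have h2 : Option.some '' R.1 ∪ {none} = Option.some '' R'.1 ∪ {none} := by
      rw [henum R, henum R', h]
    have h3 : ∀ (X Y : Set (RFun lam)),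
        Option.some '' X ∪ {none} = Option.some '' Y ∪ {none} → X ⊆ Y := by
      intro X Y hXY x hx
      have hm : (Option.some x : Option (RFun lam)) ∈ Option.some '' Y ∪ {none} := by
        rw [← hXY]
        exact Or.inl ⟨x, hx, rfl⟩
      rcases hm with ⟨y, hy, he⟩ | he
      · cases Option.some_injective _ he
        exact hy
      · exact absurd he (by simp)
    exact le_antisymm (h3 _ _ h2) (h3 _ _ h2.symm)
  refine (Cardinal.mk_le_of_injective hinj2).trans ?_
  rw [Cardinal.mk_arrow, Cardinal.mk_option]
  simp only [Cardinal.lift_uzero, Cardinal.mk_nat, Cardinal.lift_aleph0]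
  calc (#(RFun lam) + 1) ^ (ℵ₀ : Cardinal.{1})
      ≤ ((2 : Cardinal.{1}) ^ Cardinal.lift.{1} lam) ^ (ℵ₀ : Cardinal.{1}) := by
        refine Cardinal.power_le_power_right ?_
        refine le_trans (add_le_add hmkR (le_trans (le_of_lt Cardinal.one_lt_aleph0)
          (le_trans hC (Cardinal.cantor _).le))) ?_
        rw [Cardinal.add_eq_self (le_trans hC (Cardinal.cantor _).le)]
    _ = 2 ^ (Cardinal.lift.{1} lam * (ℵ₀ : Cardinal.{1})) := (Cardinal.power_mul).symm
    _ = 2 ^ Cardinal.lift.{1} lam := by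
        rw [Cardinal.mul_eq_left hC hC Cardinal.aleph0_ne_zero]

/-- For `κ` regular uncountable and `λ > κ` a strong limit cardinal of
cofinality `< κ`: `gen(E_{λ,κ}) = 2^λ`. -/
theorem genCard_clubFilter_eq_of_strongLimit
    (lam kap : Cardinal.{0}) (hreg : kap.IsRegular) (hunc : ℵ₀ < kap)
    (hkl : kap < lam) (hsl : lam.IsStrongLimit) (hcof : lam.ord.cof < kap) :
    genCard (clubFilter lam kap) = 2 ^ Cardinal.lift.{1} lam := by
  have hmem : #↥{C | IsClub' lam kap C} ∈
      {c | ∃ B, Generates (clubFilter lam kap) B ∧ Cardinal.mk ↥B = c} :=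
    ⟨{C | IsClub' lam kap C}, generates_isClub, rfl⟩
  refine le_antisymm ?_ ?_
  · exact le_trans (csInf_le' hmem) (mk_clubs_le hsl.aleph0_le)
  · refine le_csInf ⟨_, hmem⟩ ?_
    rintro c ⟨B, hBgen, rfl⟩
    exact gen_lower hreg hunc hkl hsl hcof hBgen
end
end
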